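/- There is no interior edge of a triangulation connecting two nearly singular vertices, where a vertex V is nearly singular if Υ(V) = ∅ or |Θ - π| < ϑ_σ for all Θ ∈ Υ(V), with Υ(V) the set of sums θ(Kᵢ) + θ(Kⱼ) of angles at V of pairs of triangles Kᵢ, Kⱼ sharing V along an edge, and ϑ_σ = min(ϑ, π/6) where ϑ > 0 is a lower bound for all angles in the triangulation. -/

import Mathlib

open EuclideanGeometry Set

noncomputable section

abbrev Pt := EuclideanSpace ℝ (Fin 2)

/-- A conforming triangulation: a finite set of nondegenerate triangles (given by their
    vertex maps `Fin 3 → Pt`) such that any two distinct triangles intersect in the convex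
    hull of their common vertices (a common vertex, a common edge, or ∅). -/
structure Triangulation where
  tris : Finset (Fin 3 → Pt)
  nondeg : ∀ T ∈ tris, AffineIndependent ℝ T
  conform : ∀ T ∈ tris, ∀ T' ∈ tris, T ≠ T' →
    convexHull ℝ (Set.range T) ∩ convexHull ℝ (Set.range T') =
      convexHull ℝ (Set.range T ∩ Set.range T')

namespace Triangulation

variable (𝒯 : Triangulation)

/-- The triangulated domain. -/
def domain : Set Pt := ⋃ T ∈ 𝒯.tris, convexHull ℝ (Set.range T)

/-- The angle of the triangle `T` at its `i`-th vertex. -/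
def angleAt (T : Fin 3 → Pt) (i : Fin 3) : ℝ := ∠ (T (i + 1)) (T i) (T (i + 2))

/-- Υ(V): the set of all sums θ(Kᵢ)+θ(Kⱼ) of the angles at V of two triangles
    Kᵢ, Kⱼ of the triangulation sharing an edge containing V. -/
def Upsilon (V : Pt) : Set ℝ :=
  {Θ | ∃ T₁ ∈ 𝒯.tris, ∃ T₂ ∈ 𝒯.tris, T₁ ≠ T₂ ∧
    ∃ i j : Fin 3, T₁ i = V ∧ T₂ j = V ∧
      (∃ W : Pt, W ≠ V ∧ W ∈ Set.range T₁ ∧ W ∈ Set.range T₂) ∧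
      Θ = angleAt T₁ i + angleAt T₂ j}

/-- A vertex V is nearly singular if Υ(V) = ∅ or |Θ - π| < ϑσ for all Θ ∈ Υ(V). -/
def NearlySingular (ϑσ : ℝ) (V : Pt) : Prop :=
  𝒯.Upsilon V = ∅ ∨ ∀ Θ ∈ 𝒯.Upsilon V, |Θ - Real.pi| < ϑσ

/-- An interior edge: an edge of some triangle whose open segment lies in the interior
    of the triangulated domain. -/
def InteriorEdge (V W : Pt) : Prop :=
  V ≠ W ∧ (∃ T ∈ 𝒯.tris, V ∈ Set.range T ∧ W ∈ Set.range T ∧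
      segment ℝ V W ∈ ((fun s : Finset (Fin 3) => convexHull ℝ (T '' s)) '' {s | s.card = 2})) ∧
    openSegment ℝ V W ⊆ interior 𝒯.domain

end Triangulation

lemma angle_sum_tri (T : Fin 3 → Pt) (hT : AffineIndependent ℝ T) :
    (∠ (T 1) (T 0) (T 2)) + (∠ (T 2) (T 1) (T 0)) + (∠ (T 0) (T 2) (T 1)) = Real.pi := by
  have hinj := hT.injective
  have h02 : T 0 ≠ T 2 := fun h => by simpa using hinj h
  have h12 : T 1 ≠ T 2 := fun h => by simpa using hinj h
  have h := EuclideanGeometry.angle_add_angle_add_angle_eq_pi (p₁ := T 2) (p₂ := T 0)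
    (T 1) h02
  rw [EuclideanGeometry.angle_comm (T 2) (T 0) (T 1),
    EuclideanGeometry.angle_comm (T 0) (T 1) (T 2),
    EuclideanGeometry.angle_comm (T 1) (T 2) (T 0)] at h
  linarith

lemma angleAt_sum (T : Fin 3 → Pt) (hT : AffineIndependent ℝ T) :
    Triangulation.angleAt T 0 + Triangulation.angleAt T 1 + Triangulation.angleAt T 2
      = Real.pi := by
  have e0 : Triangulation.angleAt T 0 = ∠ (T 1) (T 0) (T 2) := rfl
  have e1 : Triangulation.angleAt T 1 = ∠ (T 2) (T 1) (T 0) := rfl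
  have e2 : Triangulation.angleAt T 2 = ∠ (T 0) (T 2) (T 1) := rfl
  rw [e0, e1, e2]; exact angle_sum_tri T hT

lemma pair_angle_le {ϑ : ℝ} (T : Fin 3 → Pt) (hT : AffineIndependent ℝ T)
    (hang : ∀ i : Fin 3, ϑ ≤ Triangulation.angleAt T i) {a b : Fin 3} (hab : a ≠ b) :
    Triangulation.angleAt T a + Triangulation.angleAt T b ≤ Real.pi - ϑ := by
  have hsum := angleAt_sum T hT
  have h0 := hang 0; have h1 := hang 1; have h2 := hang 2
  have ha := Fin.mk_zero (n := 2)
  fin_cases a <;> fin_cases b <;>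
    simp only [Fin.mk_zero, Fin.mk_one, show (⟨2, by norm_num⟩ : Fin 3) = 2 from rfl] at * <;>
    first
    | exact absurd rfl hab
    | linarith

/-- No interior edge of a triangulation connects two nearly singular vertices
    (with ϑσ = min(ϑ, π/6), ϑ > 0 a lower bound for all angles of the triangulation). -/
theorem stmt7 (𝒯 : Triangulation) (ϑ : ℝ) (hϑ : 0 < ϑ)
    (hang : ∀ T ∈ 𝒯.tris, ∀ i : Fin 3, ϑ ≤ Triangulation.angleAt T i)
    (V W : Pt) (hVW : 𝒯.InteriorEdge V W) :
    ¬(𝒯.NearlySingular (min ϑ (Real.pi / 6)) V ∧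
      𝒯.NearlySingular (min ϑ (Real.pi / 6)) W) := by
  classical
  rintro ⟨hNSV, hNSW⟩
  obtain ⟨hne, ⟨T, hT, hVT, hWT, -⟩, hopen⟩ := hVW
  obtain ⟨a, rfl⟩ := hVT
  obtain ⟨b, rfl⟩ := hWT
  have hTai := 𝒯.nondeg T hT
  have hinj := hTai.injective
  have hab : a ≠ b := fun h => hne (by rw [h])
  -- affine basis
  have htop : affineSpan ℝ (Set.range T) = ⊤ := by
    rw [hTai.affineSpan_eq_top_iff_card_eq_finrank_add_one]
    simp [finrank_euclideanSpace_fin]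
  let bb : AffineBasis (Fin 3) ℝ Pt := ⟨T, hTai, htop⟩
  have hbb : ∀ i, bb i = T i := fun i => rfl
  -- the midpoint
  set M := midpoint ℝ (T a) (T b) with hM
  have hMV : M ≠ T a := by
    simp only [hM, ne_eq, midpoint_eq_left_iff]; exact fun h => hne h
  have hMW : M ≠ T b := by
    simp only [hM, ne_eq, midpoint_eq_right_iff]; exact fun h => hne h
  have hMseg : M ∈ openSegment ℝ (T a) (T b) :=
    mem_openSegment_of_ne_left_right hMV.symm hMW.symm (midpoint_mem_segment _ _)
  have hMint : M ∈ interior 𝒯.domain := hopen hMseg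
  -- M has a zero barycentric coordinate (third vertex), so not interior to hull T
  obtain ⟨c, hca, hcb⟩ : ∃ c : Fin 3, c ≠ a ∧ c ≠ b := by
    fin_cases a <;> fin_cases b <;> first
      | exact absurd rfl hab
      | exact ⟨0, by decide, by decide⟩
      | exact ⟨1, by decide, by decide⟩
      | exact ⟨2, by decide, by decide⟩
  have hcoordM : ∀ i : Fin 3, i ≠ a → i ≠ b → bb.coord i M = 0 := by
    intro i hia hib
    have : bb.coord i M = midpoint ℝ (bb.coord i (T a)) (bb.coord i (T b)) :=
      AffineMap.map_midpoint _ _ _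
    rw [this, show bb.coord i (T a) = bb.coord i (bb a) from rfl,
      show bb.coord i (T b) = bb.coord i (bb b) from rfl,
      bb.coord_apply_ne hia, bb.coord_apply_ne hib, midpoint_self]
  have hMnotint : M ∉ interior (convexHull ℝ (Set.range T)) := by
    have : Set.range T = Set.range bb := rfl
    rw [this, bb.interior_convexHull]
    intro h
    exact absurd (hcoordM c hca hcb) (ne_of_gt (h c))
  -- find another triangle containing M
  have hMC : M ∈ ⋃ T' ∈ 𝒯.tris.erase T, convexHull ℝ (Set.range T') := by
    have hclosed : IsClosed (⋃ T' ∈ 𝒯.tris.erase T, convexHull ℝ (Set.range T')) := by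
      refine Set.Finite.isClosed_biUnion ((𝒯.tris.erase T).finite_toSet)
        fun T' _ => ?_
      exact (Set.finite_range T').isCompact_convexHull (𝕜 := ℝ) |>.isClosed
    have hMcl : M ∈ closure ((convexHull ℝ (Set.range T))ᶜ) := by
      rw [closure_compl]; exact hMnotint
    have step : M ∈ closure (interior 𝒯.domain ∩ (convexHull ℝ (Set.range T))ᶜ) :=
      isOpen_interior.inter_closure ⟨hMint, hMcl⟩
    have sub1 : interior 𝒯.domain ∩ (convexHull ℝ (Set.range T))ᶜ ⊆
        ⋃ T' ∈ 𝒯.tris.erase T, convexHull ℝ (Set.range T') := by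
      rintro x ⟨hx1, hx2⟩
      have : x ∈ 𝒯.domain := interior_subset hx1
      rw [Triangulation.domain, Set.mem_iUnion₂] at this
      obtain ⟨T', hT', hxT'⟩ := this
      have hT'ne : T' ≠ T := fun h => hx2 (h ▸ hxT')
      exact Set.mem_biUnion (Finset.mem_erase.mpr ⟨hT'ne, hT'⟩) hxT'
    have := closure_mono sub1 step
    rwa [hclosed.closure_eq] at this
  rw [Set.mem_iUnion₂] at hMC
  obtain ⟨T', hT'mem, hMT'⟩ := hMC
  obtain ⟨hT'ne, hT'⟩ := Finset.mem_erase.mp hT'mem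
  -- conformity: M in hull of common vertices
  have hconf := 𝒯.conform T hT T' hT' (Ne.symm hT'ne)
  have hMT : M ∈ convexHull ℝ (Set.range T) :=
    (convex_convexHull ℝ (Set.range T)).segment_subset
      (subset_convexHull ℝ (Set.range T) (Set.mem_range_self a))
      (subset_convexHull ℝ (Set.range T) (Set.mem_range_self b)) (midpoint_mem_segment _ _)
  have hMcommon : M ∈ convexHull ℝ (Set.range T ∩ Set.range T') := by
    rw [← hconf]; exact ⟨hMT, hMT'⟩
  -- both endpoints are common vertices
  have key : ∀ i : Fin 3, (i = a ∨ i = b) → T i ∈ Set.range T' := by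
    intro i hi
    by_contra hnot
    have hzero : ∀ x ∈ Set.range T ∩ Set.range T', bb.coord i x = 0 := by
      rintro x ⟨⟨j, rfl⟩, hx2⟩
      have hji : j ≠ i := fun h => hnot (h ▸ hx2)
      exact bb.coord_apply_ne (Ne.symm hji)
    have hconv : convexHull ℝ (Set.range T ∩ Set.range T') ⊆ (bb.coord i) ⁻¹' {0} := by
      apply convexHull_min
      · intro x hx; exact hzero x hx
      · exact (convex_singleton (0:ℝ)).affine_preimage (bb.coord i)
    have := hconv hMcommon
    simp only [Set.mem_preimage, Set.mem_singleton_iff] at this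
    have hMhalf : bb.coord i M = midpoint ℝ (bb.coord i (T a)) (bb.coord i (T b)) :=
      AffineMap.map_midpoint _ _ _
    rcases hi with rfl | rfl
    · rw [show bb.coord i (T i) = bb.coord i (bb i) from rfl, bb.coord_apply_eq,
        show bb.coord i (T b) = bb.coord i (bb b) from rfl,
        bb.coord_apply_ne hab] at hMhalf
      rw [this] at hMhalf
      norm_num [midpoint_eq_smul_add, invOf_eq_inv] at hMhalf
    · rw [show bb.coord i (T i) = bb.coord i (bb i) from rfl, bb.coord_apply_eq,
        show bb.coord i (T a) = bb.coord i (bb a) from rfl,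
        bb.coord_apply_ne (Ne.symm hab)] at hMhalf
      rw [this] at hMhalf
      norm_num [midpoint_eq_smul_add, invOf_eq_inv] at hMhalf
  obtain ⟨a', ha'⟩ := key a (Or.inl rfl)
  obtain ⟨b', hb'⟩ := key b (Or.inr rfl)
  have hT'ai := 𝒯.nondeg T' hT'
  have ha'b' : a' ≠ b' := fun h => hne (by rw [← ha', ← hb', h])
  -- Upsilon memberships
  have hUV : Triangulation.angleAt T a + Triangulation.angleAt T' a' ∈ 𝒯.Upsilon (T a) :=
    ⟨T, hT, T', hT', Ne.symm hT'ne, a, a', rfl, ha', ⟨T b, hne.symm, ⟨b, rfl⟩, ⟨b', hb'⟩⟩, rfl⟩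
  have hUW : Triangulation.angleAt T b + Triangulation.angleAt T' b' ∈ 𝒯.Upsilon (T b) :=
    ⟨T, hT, T', hT', Ne.symm hT'ne, b, b', rfl, hb', ⟨T a, hne, ⟨a, rfl⟩, ⟨a', ha'⟩⟩, rfl⟩
  -- near singularity bounds
  have hVb : |Triangulation.angleAt T a + Triangulation.angleAt T' a' - Real.pi|
      < min ϑ (Real.pi / 6) := by
    rcases hNSV with h | h
    · exact absurd hUV (by rw [h]; exact Set.notMem_empty _)
    · exact h _ hUV
  have hWb : |Triangulation.angleAt T b + Triangulation.angleAt T' b' - Real.pi|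
      < min ϑ (Real.pi / 6) := by
    rcases hNSW with h | h
    · exact absurd hUW (by rw [h]; exact Set.notMem_empty _)
    · exact h _ hUW
  -- angle sum bounds
  have hTpair := pair_angle_le T hTai (hang T hT) hab
  have hT'pair := pair_angle_le T' hT'ai (hang T' hT') ha'b'
  have hmin : min ϑ (Real.pi / 6) ≤ ϑ := min_le_left _ _
  rw [abs_lt] at hVb hWb
  linarith [hVb.1, hWb.1]

end
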